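/- arXiv:0710.5839 — 3 statements merged into one kernel-verified Lean document; each statement's English description precedes it below -/
import Mathlib

section
/- Let E be a finite-generated module over L^0 which is homogeneous of type n. Then E admits a basis {φ₁,…,φₙ} of ∇-linearly independent elements, i.e. every φ ∈ E is uniquely representable as φ = α₁φ₁ + … + αₙφₙ with αᵢ ∈ L^0. -/
open MeasureTheory

namespace KHPaper

variable {Ω : Type} [MeasurableSpace Ω] {μ : Measure Ω}

/-- `L⁰(Ω)`: measurable complex functions modulo a.e. equality. -/
abbrev L0 (Ω : Type) [MeasurableSpace Ω] (μ : Measure Ω) := Ω →ₘ[μ] ℂ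
/-- real-valued `L⁰`. -/
abbrev L0R (Ω : Type) [MeasurableSpace Ω] (μ : Measure Ω) := Ω →ₘ[μ] ℝ

noncomputable instance : CommRing (L0 Ω μ) :=
  { (inferInstance : AddCommGroup (L0 Ω μ)),
    (inferInstance : CommMonoid (L0 Ω μ)) with
    left_distrib := by
      intro a b c
      apply AEEqFun.ext
      filter_upwards [AEEqFun.coeFn_mul a (b + c), AEEqFun.coeFn_add b c,
        AEEqFun.coeFn_mul a b, AEEqFun.coeFn_mul a c,
        AEEqFun.coeFn_add (a * b) (a * c)] with x h1 h2 h3 h4 h5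
      simp only [h1, h5, Pi.mul_apply, Pi.add_apply, h2, h3, h4, mul_add]
    right_distrib := by
      intro a b c
      apply AEEqFun.ext
      filter_upwards [AEEqFun.coeFn_mul (a + b) c, AEEqFun.coeFn_add a b,
        AEEqFun.coeFn_mul a c, AEEqFun.coeFn_mul b c,
        AEEqFun.coeFn_add (a * c) (b * c)] with x h1 h2 h3 h4 h5
      simp only [h1, h5, Pi.mul_apply, Pi.add_apply, h2, h3, h4, add_mul]
    zero_mul := by
      intro a
      apply AEEqFun.ext
      filter_upwards [AEEqFun.coeFn_mul 0 a, AEEqFun.coeFn_zero (β := ℂ) (μ := μ)] with x h1 h2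
      simp [h1, h2]
    mul_zero := by
      intro a
      apply AEEqFun.ext
      filter_upwards [AEEqFun.coeFn_mul a 0, AEEqFun.coeFn_zero (β := ℂ) (μ := μ)] with x h1 h2
      simp [h1, h2] }

/-- pointwise absolute value `L⁰ → L⁰ℝ`. -/
noncomputable def absL (f : L0 Ω μ) : L0R Ω μ := f.comp (fun z : ℂ => ‖z‖) continuous_norm
/-- pointwise real part. -/
noncomputable def reL (f : L0 Ω μ) : L0R Ω μ := f.comp Complex.re Complex.continuous_re
/-- pointwise complex conjugation. -/
noncomputable def conjL (f : L0 Ω μ) : L0 Ω μ :=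
  f.comp (starRingEnd ℂ) (by continuity)
/-- embedding of real `L⁰` into complex `L⁰`. -/
noncomputable def ofRealL (f : L0R Ω μ) : L0 Ω μ := f.comp Complex.ofReal Complex.continuous_ofReal
/-- pointwise square root on real `L⁰`. -/
noncomputable def sqrtL (f : L0R Ω μ) : L0R Ω μ := f.comp Real.sqrt Real.continuous_sqrt
/-- constants. -/
noncomputable def constL (Ω : Type) [MeasurableSpace Ω] (μ : Measure Ω) (c : ℂ) : L0 Ω μ :=
  AEEqFun.const Ω c

/-- idempotents of `L⁰` (the Boolean algebra `∇`). -/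
def IsIdem (π : L0 Ω μ) : Prop := π * π = π

/-- A family of idempotents is a partition of the unit in `∇`. -/
def IsPartition {ι : Type*} (π : ι → L0 Ω μ) : Prop :=
  (∀ i, IsIdem (π i)) ∧ (∀ i j, i ≠ j → π i * π j = 0) ∧
    (∀ e : L0 Ω μ, IsIdem e → (∀ i, π i * e = 0) → e = 0)

/-- a decreasing net of nonnegative elements of `L⁰ℝ` has infimum zero. -/
def InfZero {ι : Type*} (e : ι → L0R Ω μ) : Prop :=
  (∀ i, 0 ≤ e i) ∧ ∀ g : L0R Ω μ, (∀ i, g ≤ e i) → g ≤ 0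

/-- `(o)`-convergence of a net in `L⁰ℝ`. -/
def OConv {ι : Type*} [Preorder ι] (f : ι → L0R Ω μ) (l : L0R Ω μ) : Prop :=
  ∃ e : ι → L0R Ω μ, Antitone e ∧ InfZero e ∧ ∀ i, |f i - l| ≤ e i

/-- `(o)`-summability of a family in `L⁰ℝ` (order convergence of the net of partial sums). -/
def OSummable {ι : Type*} (g : ι → L0R Ω μ) : Prop :=
  ∃ s : L0R Ω μ, OConv (fun F : Finset ι => ∑ i ∈ F, g i) s

section LNS

variable {X : Type*} [AddCommGroup X]

/-- An `L⁰`-valued norm making `X` a lattice-normed space over `L⁰` (complex vector space case). -/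
structure LNSNorm (Ω : Type) [MeasurableSpace Ω] (μ : Measure Ω)
    (X : Type*) [AddCommGroup X] [Module ℂ X] where
  nrm : X → L0R Ω μ
  nrm_nonneg : ∀ x, 0 ≤ nrm x
  nrm_eq_zero : ∀ x, nrm x = 0 ↔ x = 0
  nrm_smul : ∀ (c : ℂ) (x : X), nrm (c • x) = ‖c‖ • nrm x
  nrm_triangle : ∀ x y, nrm (x + y) ≤ nrm x + nrm y

variable [Module ℂ X]

/-- `d`-decomposability (Kantorovich norm). -/
def LNSNorm.DDecomp (N : LNSNorm Ω μ X) : Prop :=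
  ∀ (x : X) (e₁ e₂ : L0R Ω μ), 0 ≤ e₁ → 0 ≤ e₂ → e₁ ⊓ e₂ = 0 → N.nrm x = e₁ + e₂ →
    ∃ x₁ x₂ : X, x = x₁ + x₂ ∧ N.nrm x₁ = e₁ ∧ N.nrm x₂ = e₂

/-- `(bo)`-convergence of a net in `X`. -/
def LNSNorm.BOConv (N : LNSNorm Ω μ X) {ι : Type*} [Preorder ι] (f : ι → X) (l : X) : Prop :=
  OConv (fun i => N.nrm (f i - l)) 0

/-- `(bo)`-Cauchy nets. -/
def LNSNorm.BOCauchy (N : LNSNorm Ω μ X) {ι : Type*} [Preorder ι] (f : ι → X) : Prop :=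
  ∃ e : ι → L0R Ω μ, Antitone e ∧ InfZero e ∧
    ∀ i j k, k ≤ i → k ≤ j → N.nrm (f i - f j) ≤ e k

/-- `(bo)`-completeness. -/
def LNSNorm.BOComplete (N : LNSNorm Ω μ X) : Prop :=
  ∀ (ι : Type) (_ : Nonempty ι) (_ : SemilatticeSup ι) (f : ι → X),
    N.BOCauchy f → ∃ l : X, N.BOConv f l

end LNS

section Norms
variable {X : Type*} [AddCommGroup X]
def DDecompN (nrm : X → L0R Ω μ) : Prop :=
  ∀ (x : X) (e₁ e₂ : L0R Ω μ), 0 ≤ e₁ → 0 ≤ e₂ → e₁ ⊓ e₂ = 0 → nrm x = e₁ + e₂ →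
    ∃ x₁ x₂ : X, x = x₁ + x₂ ∧ nrm x₁ = e₁ ∧ nrm x₂ = e₂
def BOConvN (nrm : X → L0R Ω μ) {ι : Type*} [Preorder ι] (f : ι → X) (l : X) : Prop :=
  OConv (fun i => nrm (f i - l)) 0
def BOCauchyN (nrm : X → L0R Ω μ) {ι : Type*} [Preorder ι] (f : ι → X) : Prop :=
  ∃ e : ι → L0R Ω μ, Antitone e ∧ InfZero e ∧
    ∀ i j k, k ≤ i → k ≤ j → nrm (f i - f j) ≤ e k
def BOCompleteN (nrm : X → L0R Ω μ) : Prop :=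
  ∀ (ι : Type) (_ : Nonempty ι) (_ : SemilatticeSup ι) (f : ι → X),
    BOCauchyN nrm f → ∃ l : X, BOConvN nrm f l
def BODenseN (nrm : X → L0R Ω μ) (D : Set X) : Prop :=
  ∀ x : X, ∃ (ι : Type) (_ : Nonempty ι) (_ : SemilatticeSup ι) (f : ι → X),
    (∀ i, f i ∈ D) ∧ BOConvN nrm f x
end Norms

/-- An `L⁰`-valued inner product on an `L⁰`-module. -/
structure KHInner (Ω : Type) [MeasurableSpace Ω] (μ : Measure Ω)
    (X : Type*) [AddCommGroup X] [Module (L0 Ω μ) X] where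
  inner : X → X → L0 Ω μ
  add_left : ∀ x y z, inner (x + y) z = inner x z + inner y z
  smul_left : ∀ (c : L0 Ω μ) (x y : X), inner (c • x) y = c * inner x y
  conj_symm : ∀ x y, inner x y = conjL (inner y x)
  self_real : ∀ x, inner x x = ofRealL (reL (inner x x))
  self_nonneg : ∀ x, 0 ≤ reL (inner x x)
  definite : ∀ x, inner x x = 0 → x = 0

section KH
variable {X : Type*} [AddCommGroup X] [Module (L0 Ω μ) X]
noncomputable def KHInner.knorm (K : KHInner Ω μ X) (x : X) : L0R Ω μ :=
  sqrtL (reL (K.inner x x))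
/-- `X` is a Kaplansky-Hilbert module: the induced norm is d-decomposable and (bo)-complete. -/
def KHInner.IsKH (K : KHInner Ω μ X) : Prop := DDecompN K.knorm ∧ BOCompleteN K.knorm

variable (K : KHInner Ω μ X) (D : Submodule (L0 Ω μ) X)
/-- operators with domain `D` mapping into `D`. -/
def MapsD (a : D →ₗ[L0 Ω μ] X) : Prop := ∀ φ : D, a φ ∈ D
def IsAdjAt (a : D →ₗ[L0 Ω μ] X) (ψ χ : X) : Prop :=
  ∀ φ : D, K.inner (a φ) ψ = K.inner (φ : X) χ
def AdjDomain (a : D →ₗ[L0 Ω μ] X) : Set X := {ψ | ∃ χ, IsAdjAt K D a ψ χ}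
/-- `L⁺(D)`. -/
def LPlus : Set (D →ₗ[L0 Ω μ] X) :=
  {a | MapsD D a ∧ (D : Set X) ⊆ AdjDomain K D a ∧
       ∀ ψ ∈ D, ∃ χ ∈ D, IsAdjAt K D a ψ χ}
def BOClosableOp (a : D →ₗ[L0 Ω μ] X) : Prop :=
  ∀ (ι : Type) (_ : Nonempty ι) (_ : SemilatticeSup ι) (f : ι → D) (y : X),
    BOConvN K.knorm (fun i => (f i : X)) 0 → BOConvN K.knorm (fun i => a (f i)) y → y = 0
/-- composition `a ∘ b` of operators on `D`, when `b` maps into `D`. -/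
noncomputable def compD (a b : D →ₗ[L0 Ω μ] X) (hb : MapsD D b) : D →ₗ[L0 Ω μ] X :=
  a.comp (LinearMap.codRestrict D b hb)

/-- endomorphism version: an operator on `D` having an adjoint with domain `⊇ D` and values in `D`. -/
def HasAdjE (a : Module.End (L0 Ω μ) D) : Prop :=
  ∀ ψ : D, ∃ χ : D, ∀ φ : D, K.inner (a φ : X) (ψ : X) = K.inner (φ : X) (χ : X)
/-- `L⁺(D)` realized inside `End(D)`. -/
def LPlusE : Set (Module.End (L0 Ω μ) D) := {a | HasAdjE K D a}
def IsAdjPairE (a b : Module.End (L0 Ω μ) D) : Prop :=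
  ∀ φ ψ : D, K.inner (a φ : X) (ψ : X) = K.inner (φ : X) (b ψ : X)
/-- the rank one operator `φ ⊗ ψ` on `D`. -/
noncomputable def rankOneE (φ ψ : D) : Module.End (L0 Ω μ) D where
  toFun η := K.inner (η : X) (ψ : X) • φ
  map_add' a b := by
    show K.inner (↑(a + b)) _ • φ = _
    rw [Submodule.coe_add, K.add_left]
    exact add_smul _ _ φ
  map_smul' c a := by
    show K.inner (↑(c • a)) _ • φ = _
    rw [Submodule.coe_smul, K.smul_left, RingHom.id_apply]
    exact mul_smul c _ φ
end KH

section Ops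
variable {M : Type*} [AddCommGroup M] [Module (L0 Ω μ) M]
/-- finite-generated operator: its range is a finite-generated submodule. -/
def FinGenOp (a : Module.End (L0 Ω μ) M) : Prop :=
  ∃ (n : ℕ) (g : Fin n → M), ∀ x : M, ∃ c : Fin n → L0 Ω μ, a x = ∑ i, c i • g i
def IsSubalgebraSet (U : Set (Module.End (L0 Ω μ) M)) : Prop :=
  (∀ a ∈ U, ∀ b ∈ U, a + b ∈ U) ∧ (∀ (c : L0 Ω μ), ∀ a ∈ U, c • a ∈ U) ∧
    (∀ a ∈ U, ∀ b ∈ U, a * b ∈ U)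
/-- standard algebras of operators: subalgebras containing all finite-generated operators. -/
def IsStandard (U : Set (Module.End (L0 Ω μ) M)) : Prop :=
  IsSubalgebraSet U ∧ ∀ a, FinGenOp a → a ∈ U
/-- the operator `a` is homogeneous of type one: `d(π ⬝ a(M)) = 1` for every nonzero idempotent. -/
def HomogOneOp (a : Module.End (L0 Ω μ) M) : Prop :=
  ∀ π : L0 Ω μ, IsIdem π → π ≠ 0 →
    (∃ g ∈ Set.range a, ∀ x ∈ Set.range a, ∃ c : L0 Ω μ, π • x = c • (π • g)) ∧
    ∃ x ∈ Set.range a, π • x ≠ 0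
end Ops

section DirectSum
variable {I : Type} [DecidableEq I] {X : I → Type*}
  [∀ i, AddCommGroup (X i)] [∀ i, Module (L0 Ω μ) (X i)]
  (K : ∀ i, KHInner Ω μ (X i)) (D : ∀ i, Submodule (L0 Ω μ) (X i))

/-- `D_I`: the submodule of the direct sum consisting of finitely supported tuples. -/
abbrev DI (D : ∀ i, Submodule (L0 Ω μ) (X i)) := Π₀ i, ↥(D i)

/-- the inner product of `X_I` restricted to `D_I`. -/
noncomputable def innerDI (φ ψ : DI D) : L0 Ω μ :=
  letI : ∀ (i : I) (x : ↥(D i)), Decidable (x ≠ 0) := fun _ x => Classical.dec _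
  φ.sum fun i x => (K i).inner (x : X i) ((ψ i : X i))

/-- the canonical copy of an operator on `D i` acting on `D_I`. -/
noncomputable def coordOp (i : I) (b : Module.End (L0 Ω μ) ↥(D i)) :
    Module.End (L0 Ω μ) (DI D) :=
  (DFinsupp.lsingle (R := L0 Ω μ) i).comp (b.comp (DFinsupp.lapply (R := L0 Ω μ) i))

/-- the canonical copy of the rank one operator `φ ⊗ φ`, `φ ∈ D i`, on `D_I`. -/
noncomputable def coordRankOne (i : I) (φ : ↥(D i)) : Module.End (L0 Ω μ) (DI D) :=
  coordOp D i (rankOneE (K i) (D i) φ φ)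

/-- coordinatewise operators `(a_i)` with each `a_i ∈ L⁺(D_i)`: the algebra `L⁺(D_i : i ∈ I)`. -/
def CoordLPlus : Set (Module.End (L0 Ω μ) (DI D)) :=
  {a | ∃ f : ∀ i, Module.End (L0 Ω μ) ↥(D i),
    (∀ i, HasAdjE (K i) (D i) (f i)) ∧ ∀ (φ : DI D) (i : I), a φ i = f i (φ i)}

/-- adjoint pairs on `D_I`. -/
def IsAdjPairDI (a b : Module.End (L0 Ω μ) (DI D)) : Prop :=
  ∀ φ ψ : DI D, innerDI K D (a φ) ψ = innerDI K D φ (b ψ)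

/-- the maximal `O*`-algebra `L⁺(D_I)`. -/
def LPlusDI : Set (Module.End (L0 Ω μ) (DI D)) :=
  {a | ∃ b, IsAdjPairDI K D a b}

/-- `*`-subalgebras of operators on `D_I`. -/
def IsStarSubalgDI (A : Set (Module.End (L0 Ω μ) (DI D))) : Prop :=
  IsSubalgebraSet A ∧ ∀ a ∈ A, ∃ b ∈ A, IsAdjPairDI K D a b

/-- projections on `D_I`: idempotent and self-adjoint. -/
def IsProjDI (p : Module.End (L0 Ω μ) (DI D)) : Prop :=
  p * p = p ∧ IsAdjPairDI K D p p

/-- the range of `p` is concentrated on a single coordinate. -/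
def SingleCoordRange (p : Module.End (L0 Ω μ) (DI D)) : Prop :=
  ∃ i : I, ∀ (φ : DI D) (j : I), j ≠ i → p φ j = 0

/-- `M(A)`: rank one projections in `A` whose range generators have a unique
nonzero coordinate. -/
def MSet (A : Set (Module.End (L0 Ω μ) (DI D))) :
    Set (Module.End (L0 Ω μ) (DI D)) :=
  {p | p ∈ A ∧ IsProjDI K D p ∧ HomogOneOp p ∧ SingleCoordRange D p}

end DirectSum
/-- A Banach–Kantorovich space over `L⁰` with its `L⁰`-module structure. -/
structure BKSpace (Ω : Type) [MeasurableSpace Ω] (μ : Measure Ω)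
    (X : Type*) [AddCommGroup X] [Module (L0 Ω μ) X] where
  nrm : X → L0R Ω μ
  nrm_nonneg : ∀ x, 0 ≤ nrm x
  nrm_eq_zero : ∀ x, nrm x = 0 ↔ x = 0
  nrm_smul : ∀ (c : L0 Ω μ) (x : X), nrm (c • x) = absL c * nrm x
  nrm_triangle : ∀ x y, nrm (x + y) ≤ nrm x + nrm y
  ddecomp : DDecompN nrm
  complete : BOCompleteN nrm


section Aux

variable {Ω : Type} [MeasurableSpace Ω] {μ : Measure Ω}

/-- the support idempotent of `α ∈ L⁰`. -/
noncomputable def suppIdem (α : L0 Ω μ) : L0 Ω μ :=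
  AEEqFun.mk (fun ω => if α ω = 0 then (0:ℂ) else 1) <| by
    have hg : Measurable (fun z : ℂ => if z = 0 then (0:ℂ) else 1) :=
      Measurable.ite (by simp [measurableSet_eq]) measurable_const measurable_const
    exact (hg.comp_aemeasurable α.aestronglyMeasurable.aemeasurable).aestronglyMeasurable

/-- the pointwise pseudo-inverse of `α ∈ L⁰`. -/
noncomputable def pinv (α : L0 Ω μ) : L0 Ω μ :=
  AEEqFun.mk (fun ω => (α ω)⁻¹) <|
    (measurable_inv.comp_aemeasurable α.aestronglyMeasurable.aemeasurable).aestronglyMeasurable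

lemma suppIdem_coeFn (α : L0 Ω μ) :
    ⇑(suppIdem α) =ᵐ[μ] fun ω => if α ω = 0 then (0:ℂ) else 1 :=
  AEEqFun.coeFn_mk _ _

lemma pinv_coeFn (α : L0 Ω μ) : ⇑(pinv α) =ᵐ[μ] fun ω => (α ω)⁻¹ :=
  AEEqFun.coeFn_mk _ _

lemma suppIdem_isIdem (α : L0 Ω μ) : IsIdem (suppIdem α) := by
  apply AEEqFun.ext
  filter_upwards [AEEqFun.coeFn_mul (suppIdem α) (suppIdem α), suppIdem_coeFn α] with ω h1 h2
  rw [h1]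
  simp only [Pi.mul_apply, h2]
  split_ifs <;> simp

lemma pinv_mul_self (α : L0 Ω μ) : pinv α * α = suppIdem α := by
  apply AEEqFun.ext
  filter_upwards [AEEqFun.coeFn_mul (pinv α) α, pinv_coeFn α, suppIdem_coeFn α] with ω h1 h2 h3
  rw [h1]
  simp only [Pi.mul_apply, h2, h3]
  by_cases h : α ω = 0
  · simp [h]
  · simp [h, inv_mul_cancel₀ h]

lemma suppIdem_ne_zero (α : L0 Ω μ) (hα : α ≠ 0) : suppIdem α ≠ 0 := by
  intro h
  apply hα
  apply AEEqFun.ext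
  have h0 : ⇑(suppIdem α) =ᵐ[μ] ⇑(0 : L0 Ω μ) := by rw [h]
  filter_upwards [h0, suppIdem_coeFn α, AEEqFun.coeFn_zero (β := ℂ) (μ := μ)] with ω h1 h2 h3
  rw [h2, h3] at h1
  rw [h3]
  simp only [Pi.zero_apply] at h1 ⊢
  by_cases hz : α ω = 0
  · exact hz
  · simp [hz] at h1

lemma one_isIdem : IsIdem (1 : L0 Ω μ) := mul_one 1

end Aux

/-- A finite-generated `L⁰`-module which is homogeneous of type `n`
admits a basis of `n` ∇-linearly independent elements: every element has a unique
representation `φ = α₁φ₁ + ⋯ + αₙφₙ`. -/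
theorem statement1 {E : Type*} [AddCommGroup E] [Module (L0 Ω μ) E] (n : ℕ)
    (hfg : ∃ (m : ℕ) (g : Fin m → E), ∀ x : E, ∃ c : Fin m → L0 Ω μ, x = ∑ i, c i • g i)
    (hhom : ∀ π : L0 Ω μ, IsIdem π → π ≠ 0 →
      sInf {m : ℕ | ∃ g : Fin m → E, ∀ x : E, ∃ c : Fin m → L0 Ω μ,
        π • x = ∑ i, c i • (π • g i)} = n) :
    ∃ φ : Fin n → E, ∀ x : E, ∃! c : Fin n → L0 Ω μ, x = ∑ i, c i • φ i := by
  classical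
  by_cases h1 : (1 : L0 Ω μ) = 0
  · -- trivial ring, trivial module
    refine ⟨fun _ => 0, fun x => ⟨fun _ => 0, ?_, ?_⟩⟩
    · have hx : x = 0 := by
        calc x = (1 : L0 Ω μ) • x := (one_smul _ _).symm
        _ = (0 : L0 Ω μ) • x := by rw [h1]
        _ = 0 := zero_smul _ _
      simp [hx]
    · intro c _
      funext i
      calc c i = 1 * c i := (one_mul _).symm
      _ = 0 * c i := by rw [h1]
      _ = 0 := zero_mul _
  · -- nontrivial ring: get n generators from homogeneity at π = 1
    have hT := hhom 1 one_isIdem h1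
    set T : Set ℕ := {m : ℕ | ∃ g : Fin m → E, ∀ x : E, ∃ c : Fin m → L0 Ω μ,
        (1 : L0 Ω μ) • x = ∑ i, c i • ((1 : L0 Ω μ) • g i)} with hTdef
    have hTne : T.Nonempty := by
      obtain ⟨m, g, hg⟩ := hfg
      refine ⟨m, g, fun x => ?_⟩
      obtain ⟨c, hc⟩ := hg x
      exact ⟨c, by simpa [one_smul] using hc⟩
    have hnT : n ∈ T := hT ▸ Nat.sInf_mem hTne
    obtain ⟨φ, hφ'⟩ := hnT
    have hφ : ∀ x : E, ∃ c : Fin n → L0 Ω μ, x = ∑ i, c i • φ i := by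
      intro x
      obtain ⟨c, hc⟩ := hφ' x
      exact ⟨c, by simpa [one_smul] using hc⟩
    -- ∇-linear independence of the generators
    have hind : ∀ d : Fin n → L0 Ω μ, ∑ i, d i • φ i = 0 → ∀ j, d j = 0 := by
      intro d hrel j
      by_contra hdj
      have hn : n ≠ 0 := fun h => (h ▸ j).elim0
      obtain ⟨m, rfl⟩ := Nat.exists_eq_succ_of_ne_zero hn
      set α : L0 Ω μ := d j with hα
      set β : L0 Ω μ := pinv α with hβ
      set π : L0 Ω μ := suppIdem α with hπ
      have hβα : β * α = π := pinv_mul_self α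
      have hπ1 : IsIdem π := suppIdem_isIdem α
      have hπ0 : π ≠ 0 := suppIdem_ne_zero α hdj
      -- multiply the relation by β
      have hrelβ : ∑ i, (β * d i) • φ i = 0 := by
        calc ∑ i, (β * d i) • φ i = β • ∑ i, d i • φ i := by
              rw [Finset.smul_sum]
              exact Finset.sum_congr rfl fun i _ => by rw [smul_smul]
        _ = 0 := by rw [hrel, smul_zero]
      rw [Fin.sum_univ_succAbove _ j, hβα] at hrelβ
      have hπφj : π • φ j = -∑ i, (β * d (j.succAbove i)) • φ (j.succAbove i) := by
        linear_combination (norm := module) hrelβ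
      have hπφj' : π • φ j = -∑ i, (β * d (j.succAbove i)) • (π • φ (j.succAbove i)) := by
        have := congrArg (fun y => π • y) hπφj
        simp only [smul_neg, Finset.smul_sum] at this
        calc π • φ j = (π * π) • φ j := by rw [hπ1]
        _ = π • (π • φ j) := by rw [mul_smul]
        _ = -∑ i, (β * d (j.succAbove i)) • (π • φ (j.succAbove i)) := by
              rw [this]
              congr 1
              exact Finset.sum_congr rfl fun i _ => by
                rw [smul_smul, smul_smul, mul_comm π]
      -- m generators suffice on π, contradicting homogeneity
      have hmem : m ∈ {k : ℕ | ∃ g : Fin k → E, ∀ x : E, ∃ c : Fin k → L0 Ω μ,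
          π • x = ∑ i, c i • (π • g i)} := by
        refine ⟨fun i => φ (j.succAbove i), fun x => ?_⟩
        obtain ⟨c, hc⟩ := hφ x
        refine ⟨fun i => c (j.succAbove i) - c j * (β * d (j.succAbove i)), ?_⟩
        have h2 : π • x = ∑ i, c i • (π • φ i) := by
          rw [hc, Finset.smul_sum]
          exact Finset.sum_congr rfl fun i _ => by
            rw [smul_smul, smul_smul, mul_comm π]
        rw [h2, Fin.sum_univ_succAbove (fun i => c i • (π • φ i)) j, hπφj',
          smul_neg, Finset.smul_sum, ← Finset.sum_neg_distrib, ← Finset.sum_add_distrib]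
        exact Finset.sum_congr rfl fun i _ => by
          rw [smul_smul, sub_smul]
          abel
      have hle : sInf {k : ℕ | ∃ g : Fin k → E, ∀ x : E, ∃ c : Fin k → L0 Ω μ,
          π • x = ∑ i, c i • (π • g i)} ≤ m := Nat.sInf_le hmem
      rw [hhom π hπ1 hπ0] at hle
      omega
    -- conclude
    refine ⟨φ, fun x => ?_⟩
    obtain ⟨c, hc⟩ := hφ x
    refine ⟨c, hc, fun c' hc' => ?_⟩
    have hd : ∑ i, (c' i - c i) • φ i = 0 := by
      simp only [sub_smul, Finset.sum_sub_distrib]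
      rw [← hc', ← hc, sub_self]
    funext i
    exact sub_eq_zero.mp (hind (fun i => c' i - c i) hd i)


end KHPaper
end

section
/- Let X, Y be Banach–Kantorovich spaces over L^0 and a: X → Y an L^0-bounded L^0-linear operator which is homogeneous of type n, with {ψ₁,…,ψₙ} a basis of a(X). Then there exist L^0-bounded L^0-linear functionals g₁,…,gₙ ∈ X* such that a(φ) = ∑ₖ gₖ(φ)ψₖ for all φ ∈ X. -/
open MeasureTheory

namespace KHPaper

variable {Ω : Type} [MeasurableSpace Ω] {μ : Measure Ω}

section Statement2Proof

variable {Ω : Type} [MeasurableSpace Ω] {μ : Measure Ω}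

private lemma le_iffL {p q : L0R Ω μ} : p ≤ q ↔ ∀ᵐ ω ∂μ, p ω ≤ q ω := AEEqFun.coeFn_le.symm

private lemma addleL {p p' q q' : L0R Ω μ} (h : p ≤ q) (h' : p' ≤ q') : p + p' ≤ q + q' := by
  rw [le_iffL] at *
  filter_upwards [h, h', AEEqFun.coeFn_add p p', AEEqFun.coeFn_add q q'] with ω h1 h2 h3 h4
  rw [h3, h4]
  exact add_le_add h1 h2

private lemma coeFn_absL (f : L0 Ω μ) : ⇑(absL f) =ᵐ[μ] fun ω => ‖f ω‖ :=
  AEEqFun.coeFn_comp _ _ f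

private lemma coeFn_sumL {ι : Type*} (s : Finset ι) (f : ι → L0R Ω μ) :
    ⇑(∑ j ∈ s, f j) =ᵐ[μ] fun ω => ∑ j ∈ s, (f j) ω := by
  induction s using Finset.cons_induction with
  | empty => simp only [Finset.sum_empty]; exact AEEqFun.coeFn_zero (β := ℝ) (μ := μ)
  | cons a s ha ih =>
    rw [Finset.sum_cons]
    filter_upwards [AEEqFun.coeFn_add (f a) (∑ j ∈ s, f j), ih] with ω h1 h2
    simp only [Finset.sum_cons, h1, Pi.add_apply, h2]

private lemma absL_nonneg (f : L0 Ω μ) : 0 ≤ absL f := by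
  rw [le_iffL]
  filter_upwards [coeFn_absL f, AEEqFun.coeFn_zero (β := ℝ) (μ := μ)] with ω h1 h2
  rw [h1, h2]
  exact norm_nonneg _

private lemma mulleL {a p q : L0R Ω μ} (ha : 0 ≤ a) (h : p ≤ q) : a * p ≤ a * q := by
  rw [le_iffL] at *
  filter_upwards [ha, h, AEEqFun.coeFn_mul a p, AEEqFun.coeFn_mul a q,
    AEEqFun.coeFn_zero (β := ℝ) (μ := μ)] with ω h1 h2 h3 h4 h5
  rw [h3, h4, Pi.mul_apply, Pi.mul_apply]
  rw [h5] at h1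
  exact mul_le_mul_of_nonneg_left h2 h1

private lemma absL_neg_one : absL (-1 : L0 Ω μ) = 1 := by
  apply AEEqFun.ext
  filter_upwards [coeFn_absL (-1 : L0 Ω μ), AEEqFun.coeFn_neg (1 : L0 Ω μ),
    AEEqFun.coeFn_one (β := ℂ) (μ := μ), AEEqFun.coeFn_one (β := ℝ) (μ := μ)] with ω h1 h2 h3 h4
  rw [h1, h4]
  simp only [h2, Pi.neg_apply, h3, Pi.one_apply, map_neg_eq_map, map_one, norm_neg, norm_one]

section BK
variable {X : Type*} [AddCommGroup X] [Module (L0 Ω μ) X] (B : BKSpace Ω μ X)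

private lemma nrm_zero : B.nrm 0 = 0 := (B.nrm_eq_zero 0).2 rfl

private lemma nrm_neg (x : X) : B.nrm (-x) = B.nrm x := by
  rw [← neg_one_smul (L0 Ω μ) x, B.nrm_smul, absL_neg_one, one_mul]

private lemma nrm_sum_le {ι : Type*} (s : Finset ι) (f : ι → X) :
    B.nrm (∑ j ∈ s, f j) ≤ ∑ j ∈ s, B.nrm (f j) := by
  induction s using Finset.cons_induction with
  | empty => simp [nrm_zero]
  | cons a s ha ih =>
    rw [Finset.sum_cons, Finset.sum_cons]
    exact le_trans (B.nrm_triangle _ _) (addleL le_rfl ih)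

private lemma nrm_le_add (x y : X) : B.nrm x ≤ B.nrm y + B.nrm (x - y) := by
  have : x = y + (x - y) := by abel
  calc B.nrm x = B.nrm (y + (x - y)) := by rw [← this]
  _ ≤ _ := B.nrm_triangle _ _

end BK

/-- linear independence over `L⁰`. -/
private def IndepL (μ : Measure Ω) {Y : Type*} [AddCommGroup Y] [Module (L0 Ω μ) Y] (n : ℕ) (ψ : Fin n → Y) : Prop :=
  ∀ d : Fin n → L0 Ω μ, ∑ j, d j • ψ j = 0 → ∀ j, d j = 0

end Statement2Proof

section Statement2Proof2

variable {Ω : Type} [MeasurableSpace Ω] {μ : Measure Ω}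

/-- running pointwise minimum. -/
private def Hmin (G : ℕ → Ω → ℝ) : ℕ → Ω → ℝ
  | 0 => G 0
  | (m+1) => fun ω => min (Hmin G m ω) (G (m+1) ω)

private lemma Hmin_meas {G : ℕ → Ω → ℝ} (hG : ∀ t, Measurable (G t)) (m : ℕ) :
    Measurable (Hmin G m) := by
  induction m with
  | zero => exact hG 0
  | succ m ih => exact Measurable.min ih (hG (m+1))

private lemma Hmin_nonneg {G : ℕ → Ω → ℝ} (hG : ∀ t ω, 0 ≤ G t ω) (m : ℕ) (ω : Ω) :
    0 ≤ Hmin G m ω := by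
  induction m with
  | zero => exact hG 0 ω
  | succ m ih => exact le_min ih (hG (m+1) ω)

private lemma Hmin_antitone {G : ℕ → Ω → ℝ} (ω : Ω) : Antitone (fun m => Hmin G m ω) := by
  apply antitone_nat_of_succ_le
  intro m
  exact min_le_left _ _

private lemma Hmin_le_G {G : ℕ → Ω → ℝ} (m : ℕ) (ω : Ω) : Hmin G m ω ≤ G m ω := by
  cases m with
  | zero => exact le_rfl
  | succ m => exact min_le_right _ _

/-- mixing coefficient recursion. -/
private noncomputable def DcRec (π : ℕ → L0 Ω μ) {n : ℕ} (q : ℕ → Fin n → ℂ) : ℕ → Fin n → L0 Ω μ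
  | 0 => fun j => AEEqFun.const Ω (q 0 j)
  | (m+1) => fun j => π (m+1) * AEEqFun.const Ω (q (m+1) j) + (1 - π (m+1)) * DcRec π q m j

open Classical in
/-- indicator elements of `L0` built from a measurable predicate. -/
private noncomputable def indL (p : Ω → Prop) (hp : MeasurableSet {ω | p ω}) : L0 Ω μ :=
  AEEqFun.mk (fun ω => if p ω then (1:ℂ) else 0)
    ((Measurable.ite hp measurable_const measurable_const).aestronglyMeasurable)

open Classical in
private lemma indL_coe (p : Ω → Prop) (hp : MeasurableSet {ω | p ω}) :
    ⇑(indL (μ := μ) p hp) =ᵐ[μ] fun ω => if p ω then (1:ℂ) else 0 :=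
  AEEqFun.coeFn_mk _ _

private lemma indL_idem (p : Ω → Prop) (hp : MeasurableSet {ω | p ω}) :
    indL (μ := μ) p hp * indL p hp = indL p hp := by
  apply AEEqFun.ext
  filter_upwards [AEEqFun.coeFn_mul (indL (μ := μ) p hp) (indL p hp), indL_coe p hp]
    with ω h1 h2
  classical
  rw [h1, Pi.mul_apply, h2]
  by_cases h : p ω <;> simp [h]

section BK2
variable {Y : Type*} [AddCommGroup Y] [Module (L0 Ω μ) Y] (B : BKSpace Ω μ Y)

private lemma nrm_sub_le (x y : Y) : B.nrm (x - y) ≤ B.nrm x + B.nrm y := by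
  rw [sub_eq_add_neg]
  exact le_trans (B.nrm_triangle x (-y)) (by rw [nrm_neg])

/-- norm of an idempotent mixture, pointwise. -/
private lemma nrm_mix (π : L0 Ω μ) (hπ : π * π = π) (w w' : Y) :
    ∀ᵐ ω ∂μ, (B.nrm (π • w + (1 - π) • w')) ω
      = ‖π ω‖ * (B.nrm w) ω + ‖(1 - π) ω‖ * (B.nrm w') ω := by
  set m := π • w + (1 - π) • w' with hm
  have hz1 : π * (1 - π) = 0 := by
    calc π * (1 - π) = π - π * π := by ring
    _ = 0 := by rw [hπ]; ring
  have hz2 : (1 - π) * π = 0 := by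
    calc (1 - π) * π = π - π * π := by ring
    _ = 0 := by rw [hπ]; ring
  have hπ' : (1 - π) * (1 - π) = 1 - π := by
    calc (1 - π) * (1 - π) = 1 - π - π + π * π := by ring
    _ = 1 - π := by rw [hπ]; ring
  have hπm : π • m = π • w := by
    rw [hm, smul_add, smul_smul, smul_smul, hπ, hz1, zero_smul, add_zero]
  have hπm' : (1 - π) • m = (1 - π) • w' := by
    rw [hm, smul_add, smul_smul, smul_smul, hπ', hz2, zero_smul, zero_add]
  have e1 : absL π * B.nrm m = absL π * B.nrm w := by
    rw [← B.nrm_smul, ← B.nrm_smul, hπm]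
  have e2 : absL (1 - π) * B.nrm m = absL (1 - π) * B.nrm w' := by
    rw [← B.nrm_smul, ← B.nrm_smul, hπm']
  have hidem : ∀ᵐ ω ∂μ, π ω * π ω = π ω := by
    have := AEEqFun.coeFn_mul π π
    rw [hπ] at this
    filter_upwards [this] with ω h
    exact h.symm
  have c1 := congrArg (fun (f : L0R Ω μ) => ⇑f) e1
  have c2 := congrArg (fun (f : L0R Ω μ) => ⇑f) e2
  filter_upwards [hidem,
    AEEqFun.coeFn_mul (absL π) (B.nrm m), AEEqFun.coeFn_mul (absL π) (B.nrm w),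
    AEEqFun.coeFn_mul (absL (1-π)) (B.nrm m), AEEqFun.coeFn_mul (absL (1-π)) (B.nrm w'),
    coeFn_absL π, coeFn_absL (1-π), AEEqFun.coeFn_sub (1 : L0 Ω μ) π,
    AEEqFun.coeFn_one (β := ℂ) (μ := μ)] with ω hid k1 k2 k3 k4 a1 a2 s1 o1
  have e1ω : ‖π ω‖ * (B.nrm m) ω = ‖π ω‖ * (B.nrm w) ω := by
    have := congrFun c1 ω
    simp only [k1, k2, Pi.mul_apply, a1] at this
    exact this
  have e2ω : ‖(1-π) ω‖ * (B.nrm m) ω = ‖(1-π) ω‖ * (B.nrm w') ω := by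
    have := congrFun c2 ω
    simp only [k3, k4, Pi.mul_apply, a2] at this
    exact this
  have hval : π ω = 0 ∨ π ω = 1 := by
    have h0 : π ω * (π ω - 1) = 0 := by linear_combination hid
    rcases mul_eq_zero.1 h0 with h | h
    · exact Or.inl h
    · exact Or.inr (by linear_combination h)
  have habs : ‖π ω‖ + ‖(1-π) ω‖ = 1 := by
    rw [s1, Pi.sub_apply, o1, Pi.one_apply]
    rcases hval with h | h <;> simp [h]
  calc (B.nrm m) ω = (‖π ω‖ + ‖(1-π) ω‖) * (B.nrm m) ω := by
        rw [habs, one_mul]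
    _ = ‖π ω‖ * (B.nrm w) ω + ‖(1-π) ω‖ * (B.nrm w') ω := by
        rw [add_mul, e1ω, e2ω]

end BK2

end Statement2Proof2

section Statement2Proof3

variable {Ω : Type} [MeasurableSpace Ω] {μ : Measure Ω}
variable {Y : Type*} [AddCommGroup Y] [Module (L0 Ω μ) Y]

set_option maxHeartbeats 2000000 in
open Classical in
private lemma coordBound (B : BKSpace Ω μ Y) :
    ∀ (n : ℕ) (ψ : Fin n → Y), IndepL μ n ψ → ∀ i : Fin n,
      ∃ k : L0R Ω μ, 0 ≤ k ∧
        ∀ d : Fin n → L0 Ω μ, absL (d i) ≤ k * B.nrm (∑ j, d j • ψ j) := by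
  intro n
  induction n with
  | zero => intro ψ _ i; exact i.elim0
  | succ n IH =>
    intro ψ hind i
    set ψ' : Fin n → Y := fun j => ψ (i.succAbove j) with hψ'
    have hind' : IndepL μ n ψ' := by
      intro e he j
      have h0 : ∑ t, (Fin.insertNth (α := fun _ => L0 Ω μ) i 0 e) t • ψ t = 0 := by
        rw [Fin.sum_univ_succAbove (fun t => (Fin.insertNth (α := fun _ => L0 Ω μ) i 0 e) t • ψ t) i]
        simp only [Fin.insertNth_apply_same, Fin.insertNth_apply_succAbove, zero_smul, zero_add]
        exact he
      have := hind _ h0 (i.succAbove j)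
      rwa [Fin.insertNth_apply_succAbove] at this
    choose k' hk'0 hk'b using fun j => IH ψ' hind' j
    -- dense enumeration of rational coefficient tuples
    obtain ⟨s, hs⟩ := exists_surjective_nat (Fin n → ℚ × ℚ)
    set Q : ℕ → Fin n → ℂ := fun t j =>
      (((s t j).1 : ℝ) : ℂ) + (((s t j).2 : ℝ) : ℂ) * Complex.I with hQ
    have hQdense : ∀ (w : Fin n → ℂ) (ε : ℝ), 0 < ε →
        ∃ t, ∀ j, ‖Q t j - w j‖ < ε := by
      intro w ε hε
      have hj : ∀ j : Fin n, ∃ qr : ℚ × ℚ,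
          ‖((((qr.1 : ℝ) : ℂ)) + (((qr.2 : ℝ) : ℂ)) * Complex.I) - w j‖ < ε := by
        intro j
        obtain ⟨q1, hq1⟩ := exists_rat_near (w j).re (half_pos hε)
        obtain ⟨q2, hq2⟩ := exists_rat_near (w j).im (half_pos hε)
        refine ⟨(q1, q2), ?_⟩
        set z : ℂ := ((((q1 : ℝ) : ℂ)) + (((q2 : ℝ) : ℂ)) * Complex.I) - w j with hz
        have hre : z.re = (q1 : ℝ) - (w j).re := by
          simp [hz, Complex.add_re, Complex.sub_re, Complex.mul_re, Complex.I_re, Complex.I_im]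
        have him : z.im = (q2 : ℝ) - (w j).im := by
          simp [hz, Complex.add_im, Complex.sub_im, Complex.mul_im, Complex.I_re, Complex.I_im]
        have h1 : |z.re| < ε / 2 := by rw [hre, abs_sub_comm]; exact hq1
        have h2 : |z.im| < ε / 2 := by rw [him, abs_sub_comm]; exact hq2
        calc ‖z‖ ≤ |z.re| + |z.im| := Complex.norm_le_abs_re_add_abs_im z
        _ < ε / 2 + ε / 2 := add_lt_add h1 h2
        _ = ε := by ring
      choose qr hqr using hj
      obtain ⟨t, ht⟩ := hs qr
      refine ⟨t, fun j => ?_⟩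
      have hQt : Q t j = (((qr j).1 : ℝ) : ℂ) + (((qr j).2 : ℝ) : ℂ) * Complex.I := by
        simp only [hQ, ht]
      rw [hQt]
      exact hqr j
    -- the vectors and their norms
    set zq : ℕ → Y := fun t => ∑ j, (AEEqFun.const (μ := μ) Ω (Q t j) : L0 Ω μ) • ψ' j with hzq
    set u : ℕ → L0R Ω μ := fun t => B.nrm (ψ i + zq t) with hu
    -- measurable nonneg representatives
    have hrep : ∀ t : ℕ, ∃ g : Ω → ℝ, Measurable g ∧ (∀ ω, 0 ≤ g ω) ∧ ⇑(u t) =ᵐ[μ] g := by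
      intro t
      have asm := AEEqFun.aestronglyMeasurable (u t)
      refine ⟨fun ω => max (asm.mk _ ω) 0,
        (asm.stronglyMeasurable_mk.measurable).max measurable_const,
        fun ω => le_max_right _ _, ?_⟩
      have h0 : (0 : L0R Ω μ) ≤ u t := B.nrm_nonneg _
      rw [← AEEqFun.coeFn_le] at h0
      filter_upwards [asm.ae_eq_mk, h0, AEEqFun.coeFn_zero (β := ℝ) (μ := μ)] with ω h1 h2 h3
      rw [← h1]
      rw [h3] at h2
      exact (max_eq_left (by simpa using h2)).symm
    choose G hGmeas hGpos hG using hrep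
    set H : ℕ → Ω → ℝ := Hmin G with hH
    have hHmeas : ∀ m, Measurable (H m) := Hmin_meas hGmeas
    have hHpos : ∀ m ω, 0 ≤ H m ω := Hmin_nonneg hGpos
    -- the infimum
    set V : Ω → ℝ := fun ω => ⨅ m, H m ω with hV
    have hbdd : ∀ ω, BddBelow (Set.range fun m => H m ω) :=
      fun ω => ⟨0, by rintro x ⟨m, rfl⟩; exact hHpos m ω⟩
    have hVtend : ∀ ω, Filter.Tendsto (fun m => H m ω) Filter.atTop (nhds (V ω)) :=
      fun ω => tendsto_atTop_ciInf (Hmin_antitone ω) (hbdd ω)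
    have hVmeas : Measurable V :=
      measurable_of_tendsto_metrizable (fun m => hHmeas m) (tendsto_pi_nhds.2 hVtend)
    have hVpos : ∀ ω, 0 ≤ V ω := fun ω => Real.iInf_nonneg (fun m => hHpos m ω)
    have hVle : ∀ m ω, V ω ≤ H m ω := fun m ω => ciInf_le (hbdd ω) m
    set mkV : L0R Ω μ := AEEqFun.mk V hVmeas.aestronglyMeasurable with hmkV
    -- mixing indicators and coefficients
    set π : ℕ → L0 Ω μ := fun m =>
      indL (fun ω => G m ω < H (m-1) ω) (measurableSet_lt (hGmeas m) (hHmeas (m-1))) with hπ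
    have hπidem : ∀ m, π m * π m = π m := fun m => indL_idem _ _
    set Dc : ℕ → Fin n → L0 Ω μ := DcRec π Q with hDc
    set Z : ℕ → Y := fun m => ∑ j, Dc m j • ψ' j with hZ
    -- invariant: the norm of ψ i + Z m is H m
    have hDc0 : ∀ j, Dc 0 j = AEEqFun.const Ω (Q 0 j) := fun j => by
      rw [hDc]; rfl
    have hDcS : ∀ m j, Dc (m+1) j
        = π (m+1) * AEEqFun.const Ω (Q (m+1) j) + (1 - π (m+1)) * Dc m j := fun m j => by
      rw [hDc]; rfl
    have hINV : ∀ m, ⇑(B.nrm (ψ i + Z m)) =ᵐ[μ] H m := by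
      intro m
      induction m with
      | zero =>
        have hz0 : Z 0 = zq 0 := by
          rw [hZ, hzq]
          exact Finset.sum_congr rfl (fun j _ => by rw [hDc0])
        rw [hz0]
        exact hG 0
      | succ m ih =>
        have hone : π (m+1) + (1 - π (m+1)) = 1 := by ring
        have hmixalg : ψ i + Z (m+1)
            = π (m+1) • (ψ i + zq (m+1)) + (1 - π (m+1)) • (ψ i + Z m) := by
          rw [smul_add, smul_add, add_add_add_comm, ← add_smul, hone, one_smul]
          congr 1
          simp only [hzq, hZ]
          rw [Finset.smul_sum, Finset.smul_sum, ← Finset.sum_add_distrib]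
          refine Finset.sum_congr rfl (fun j _ => ?_)
          rw [smul_smul, smul_smul, ← add_smul, ← hDcS]
        have hmix := nrm_mix B (π (m+1)) (hπidem (m+1)) (ψ i + zq (m+1)) (ψ i + Z m)
        have hgm : ⇑(B.nrm (ψ i + zq (m+1))) =ᵐ[μ] G (m+1) := hG (m+1)
        have hπm : ⇑(π (m+1)) =ᵐ[μ] fun ω => if G (m+1) ω < H m ω then (1:ℂ) else 0 :=
          indL_coe _ _
        rw [hmixalg]
        filter_upwards [hmix, hgm, ih, hπm,
          AEEqFun.coeFn_sub (1 : L0 Ω μ) (π (m+1)),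
          AEEqFun.coeFn_one (β := ℂ) (μ := μ)] with ω h1 h2 h3 h4 h5 h6
        rw [h1, h2, h3, h4, h5, Pi.sub_apply, h4, h6, Pi.one_apply]
        have hHsucc : H (m+1) ω = min (H m ω) (G (m+1) ω) := rfl
        by_cases hc : G (m+1) ω < H m ω
        · simp only [hc, if_true, hHsucc]
          rw [min_eq_right (le_of_lt hc)]
          simp
        · simp only [hc, if_false, hHsucc]
          rw [min_eq_left (le_of_not_gt hc)]
          simp
    -- V is a lower bound for the norm over the whole affine subspace
    have hVlow : ∀ c : Fin n → L0 Ω μ, mkV ≤ B.nrm (ψ i + ∑ j, c j • ψ' j) := by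
      intro c
      set w : Y := ψ i + ∑ j, c j • ψ' j with hw
      have ht : ∀ t : ℕ, u t ≤ B.nrm w
          + ∑ j, absL (AEEqFun.const Ω (Q t j) - c j) * B.nrm (ψ' j) := by
        intro t
        have hdiff : ψ i + zq t - w = ∑ j, (AEEqFun.const Ω (Q t j) - c j) • ψ' j := by
          rw [hw]
          simp only [hzq]
          rw [add_sub_add_left_eq_sub, ← Finset.sum_sub_distrib]
          exact Finset.sum_congr rfl fun j _ => (sub_smul _ _ _).symm
        have h2 : B.nrm (ψ i + zq t - w)
            ≤ ∑ j, absL (AEEqFun.const Ω (Q t j) - c j) * B.nrm (ψ' j) := by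
          rw [hdiff]
          refine le_trans (nrm_sum_le B _ _) ?_
          exact le_of_eq (Finset.sum_congr rfl fun j _ => B.nrm_smul _ _)
        exact le_trans (nrm_le_add B _ _) (addleL le_rfl h2)
      have hco : ∀ t : ℕ, ∀ᵐ ω ∂μ,
          ⇑(B.nrm w + ∑ j, absL (AEEqFun.const Ω (Q t j) - c j) * B.nrm (ψ' j)) ω
          = (B.nrm w) ω + ∑ j, ‖Q t j - (c j) ω‖ * (B.nrm (ψ' j)) ω := by
        intro t
        have hj : ∀ᵐ ω ∂μ, ∀ j : Fin n,
            ((absL (AEEqFun.const Ω (Q t j) - c j) * B.nrm (ψ' j) : L0R Ω μ)) ω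
            = ‖Q t j - (c j) ω‖ * (B.nrm (ψ' j)) ω := by
          rw [ae_all_iff]
          intro j
          filter_upwards [AEEqFun.coeFn_mul (absL (AEEqFun.const Ω (Q t j) - c j)) (B.nrm (ψ' j)),
            coeFn_absL (AEEqFun.const Ω (Q t j) - c j),
            AEEqFun.coeFn_sub (AEEqFun.const Ω (Q t j)) (c j),
            AEEqFun.coeFn_const (α := Ω) (μ := μ) (Q t j)] with ω h1 h2 h3 h4
          rw [h1, Pi.mul_apply, h2, h3, Pi.sub_apply, h4]
          rfl
        filter_upwards [AEEqFun.coeFn_add (B.nrm w)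
            (∑ j, absL (AEEqFun.const Ω (Q t j) - c j) * B.nrm (ψ' j)),
          coeFn_sumL Finset.univ (fun j => absL (AEEqFun.const Ω (Q t j) - c j) * B.nrm (ψ' j)),
          hj] with ω h1 h2 h3
        rw [h1, Pi.add_apply, h2]
        exact congrArg (fun r => (B.nrm w) ω + r) (Finset.sum_congr rfl fun j _ => h3 j)
      have hNpos : ∀ᵐ ω ∂μ, ∀ j : Fin n, 0 ≤ (B.nrm (ψ' j)) ω := by
        rw [ae_all_iff]
        intro j
        have h0 := B.nrm_nonneg (ψ' j)
        rw [← AEEqFun.coeFn_le] at h0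
        filter_upwards [h0, AEEqFun.coeFn_zero (β := ℝ) (μ := μ)] with ω h1 h2
        rw [h2] at h1
        exact h1
      have hallt : ∀ᵐ ω ∂μ, ∀ t : ℕ, (u t) ω
          ≤ (B.nrm w) ω + ∑ j, ‖Q t j - (c j) ω‖ * (B.nrm (ψ' j)) ω := by
        rw [ae_all_iff]
        intro t
        have h1 := ht t
        rw [le_iffL] at h1
        filter_upwards [h1, hco t] with ω ha hb
        rw [← hb]
        exact ha
      have hGu : ∀ᵐ ω ∂μ, ∀ t : ℕ, (u t) ω = G t ω := by
        rw [ae_all_iff]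
        exact hG
      rw [le_iffL]
      filter_upwards [hallt, hNpos, hGu,
        AEEqFun.coeFn_mk V hVmeas.aestronglyMeasurable] with ω h1 h2 h3 h4
      have hgoal : V ω ≤ (B.nrm w) ω := by
        set S : ℝ := ∑ j, (B.nrm (ψ' j)) ω with hS
        have hS0 : 0 ≤ S := Finset.sum_nonneg fun j _ => h2 j
        refine le_of_forall_pos_le_add ?_
        intro ε hε
        have hε' : 0 < ε / (S + 1) := by positivity
        obtain ⟨t, htq⟩ := hQdense (fun j => (c j) ω) (ε / (S+1)) hε'
        have hVG : V ω ≤ G t ω := le_trans (hVle t ω) (Hmin_le_G t ω)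
        have hsum : ∑ j, ‖Q t j - (c j) ω‖ * (B.nrm (ψ' j)) ω
            ≤ (ε / (S+1)) * S := by
          rw [hS, Finset.mul_sum]
          exact Finset.sum_le_sum fun j _ =>
            mul_le_mul_of_nonneg_right (le_of_lt (htq j)) (h2 j)
        have hfrac : (ε / (S+1)) * S ≤ ε := by
          rw [div_mul_eq_mul_div, div_le_iff₀ (by positivity)]
          nlinarith
        calc V ω ≤ G t ω := hVG
        _ = (u t) ω := (h3 t).symm
        _ ≤ (B.nrm w) ω + ∑ j, ‖Q t j - (c j) ω‖ * (B.nrm (ψ' j)) ω := h1 t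
        _ ≤ (B.nrm w) ω + ε := by
            refine add_le_add le_rfl (le_trans hsum hfrac)
      rw [h4]
      exact hgoal
    -- the set where V vanishes is null
    have hVne : ∀ᵐ ω ∂μ, 0 < V ω := by
      set pB : L0 Ω μ := indL (fun ω => V ω ≤ 0)
        (measurableSet_le hVmeas measurable_const) with hpB
      have hpBidem : pB * pB = pB := indL_idem _ _
      have hpBco : ⇑pB =ᵐ[μ] fun ω => if V ω ≤ 0 then (1:ℂ) else 0 := indL_coe _ _
      -- L0R level coordinate difference bound
      have hdml : ∀ m l : ℕ, ∀ j : Fin n,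
          absL (pB * Dc m j - pB * Dc l j)
            ≤ k' j * (absL pB * (B.nrm (ψ i + Z m) + B.nrm (ψ i + Z l))) := by
        intro m l j
        have hzml : ∑ t, (pB * Dc m t - pB * Dc l t) • ψ' t = pB • (Z m - Z l) := by
          simp only [hZ]
          rw [smul_sub, Finset.smul_sum, Finset.smul_sum, ← Finset.sum_sub_distrib]
          refine Finset.sum_congr rfl fun t _ => ?_
          rw [sub_smul, mul_smul, mul_smul]
        have h1 := hk'b j (fun t => pB * Dc m t - pB * Dc l t)
        rw [hzml] at h1
        refine le_trans h1 ?_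
        rw [B.nrm_smul]
        refine mulleL (hk'0 j) (mulleL (absL_nonneg pB) ?_)
        have heq : Z m - Z l = (ψ i + Z m) - (ψ i + Z l) := by abel
        rw [heq]
        exact nrm_sub_le B _ _
      -- pointwise representatives
      set pfun : ℕ → Fin n → Ω → ℂ := fun m j ω => (pB * Dc m j) ω with hpfun
      have hpmeas : ∀ (m : ℕ) (j : Fin n), AEMeasurable (pfun m j) μ := fun m j =>
        (AEEqFun.aestronglyMeasurable (pB * Dc m j)).aemeasurable
      have hmaster : ∀ᵐ ω ∂μ, ∀ m l : ℕ, ∀ j : Fin n,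
          ‖pfun m j ω - pfun l j ω‖
            ≤ (k' j) ω * ((if V ω ≤ 0 then (1:ℝ) else 0) * (H m ω + H l ω)) := by
        rw [ae_all_iff]; intro m
        rw [ae_all_iff]; intro l
        rw [ae_all_iff]; intro j
        have h1 := hdml m l j
        rw [le_iffL] at h1
        filter_upwards [h1,
          coeFn_absL (pB * Dc m j - pB * Dc l j),
          AEEqFun.coeFn_sub (pB * Dc m j) (pB * Dc l j),
          AEEqFun.coeFn_mul (k' j) (absL pB * (B.nrm (ψ i + Z m) + B.nrm (ψ i + Z l))),
          AEEqFun.coeFn_mul (absL pB) (B.nrm (ψ i + Z m) + B.nrm (ψ i + Z l)),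
          AEEqFun.coeFn_add (B.nrm (ψ i + Z m)) (B.nrm (ψ i + Z l)),
          coeFn_absL pB, hpBco, hINV m, hINV l] with ω a1 a2 a3 a4 a5 a6 a7 a8 a9 a10
        rw [a2, a3, Pi.sub_apply] at a1
        rw [a4, Pi.mul_apply, a5, Pi.mul_apply, a6, Pi.add_apply, a7, a8, a9, a10] at a1
        have habs : ‖if V ω ≤ 0 then (1:ℂ) else 0‖
            = (if V ω ≤ 0 then (1:ℝ) else 0) := by
          by_cases hv : V ω ≤ 0 <;> simp [hv]
        rw [habs] at a1
        exact a1
      have hknn : ∀ᵐ ω ∂μ, ∀ j : Fin n, 0 ≤ (k' j) ω := by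
        rw [ae_all_iff]; intro j
        have h0 := hk'0 j
        rw [le_iffL] at h0
        filter_upwards [h0, AEEqFun.coeFn_zero (β := ℝ) (μ := μ)] with ω h1 h2
        rw [h2] at h1
        exact h1
      -- pointwise limits
      set gL : Fin n → Ω → ℂ := fun j ω =>
        Filter.limUnder Filter.atTop (fun m => pfun m j ω) with hgL
      have htendae : ∀ᵐ ω ∂μ, ∀ j : Fin n,
          Filter.Tendsto (fun m => pfun m j ω) Filter.atTop (nhds (gL j ω)) := by
        filter_upwards [hmaster, hknn] with ω hbnd hk0
        intro j
        have hcauchy : CauchySeq (fun m => pfun m j ω) := by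
          apply cauchySeq_of_le_tendsto_0
            (fun N => (k' j) ω * ((if V ω ≤ 0 then (1:ℝ) else 0) * (H N ω + H N ω)))
          · intro a b N hNa hNb
            rw [Complex.dist_eq]
            refine le_trans (hbnd a b j) ?_
            refine mul_le_mul_of_nonneg_left ?_ (hk0 j)
            refine mul_le_mul_of_nonneg_left ?_ (by positivity)
            exact add_le_add (Hmin_antitone ω hNa) (Hmin_antitone ω hNb)
          · by_cases hv : V ω ≤ 0
            · have hV0 : V ω = 0 := le_antisymm hv (hVpos ω)
              simp only [hv, if_true, one_mul]
              have := ((hVtend ω).add (hVtend ω)).const_mul ((k' j) ω)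
              rw [hV0] at this
              simpa using this
            · simp only [hv, if_false, zero_mul, mul_zero]
              exact tendsto_const_nhds
        obtain ⟨L, hL⟩ := cauchySeq_tendsto_of_complete hcauchy
        have hgleq : gL j ω = L := by rw [hgL]; exact hL.limUnder_eq
        rw [hgleq]
        exact hL
      have hgmeas : ∀ j : Fin n, AEMeasurable (gL j) μ := fun j =>
        aemeasurable_of_tendsto_metrizable_ae Filter.atTop (fun m => hpmeas m j)
          (htendae.mono fun ω h => h j)
      set cL : Fin n → L0 Ω μ := fun j =>
        AEEqFun.mk (gL j) (hgmeas j).aestronglyMeasurable with hcL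
      -- relation norm bound
      have hrel : ∀ m : ℕ, B.nrm (pB • ψ i + ∑ j, cL j • ψ' j)
          ≤ absL pB * B.nrm (ψ i + Z m)
            + ∑ j, absL (cL j - pB * Dc m j) * B.nrm (ψ' j) := by
        intro m
        have hiden : pB • ψ i + ∑ j, cL j • ψ' j
            = pB • (ψ i + Z m) + ∑ j, (cL j - pB * Dc m j) • ψ' j := by
          rw [smul_add, add_assoc]
          congr 1
          have hzm : pB • Z m = ∑ j, (pB * Dc m j) • ψ' j := by
            simp only [hZ]
            rw [Finset.smul_sum]
            exact Finset.sum_congr rfl fun t _ => by rw [mul_smul]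
          rw [hzm, ← Finset.sum_add_distrib]
          refine Finset.sum_congr rfl fun t _ => ?_
          rw [← add_smul, add_sub_cancel]
        rw [hiden]
        refine le_trans (B.nrm_triangle _ _) (addleL (le_of_eq (B.nrm_smul _ _)) ?_)
        exact le_trans (nrm_sum_le B _ _)
          (le_of_eq (Finset.sum_congr rfl fun j _ => B.nrm_smul _ _))
      -- the relation vector is zero
      have hw0 : B.nrm (pB • ψ i + ∑ j, cL j • ψ' j) = 0 := by
        refine le_antisymm ?_ (B.nrm_nonneg _)
        rw [le_iffL]
        have hco2 : ∀ m : ℕ, ∀ᵐ ω ∂μ,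
            ⇑(absL pB * B.nrm (ψ i + Z m)
              + ∑ j, absL (cL j - pB * Dc m j) * B.nrm (ψ' j)) ω
            = (if V ω ≤ 0 then (1:ℝ) else 0) * H m ω
              + ∑ j, ‖gL j ω - pfun m j ω‖ * (B.nrm (ψ' j)) ω := by
          intro m
          have hj : ∀ᵐ ω ∂μ, ∀ j : Fin n,
              ((absL (cL j - pB * Dc m j) * B.nrm (ψ' j) : L0R Ω μ)) ω
              = ‖gL j ω - pfun m j ω‖ * (B.nrm (ψ' j)) ω := by
            rw [ae_all_iff]; intro j
            filter_upwards [AEEqFun.coeFn_mul (absL (cL j - pB * Dc m j)) (B.nrm (ψ' j)),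
              coeFn_absL (cL j - pB * Dc m j),
              AEEqFun.coeFn_sub (cL j) (pB * Dc m j),
              AEEqFun.coeFn_mk (gL j) (hgmeas j).aestronglyMeasurable] with ω b1 b2 b3 b4
            rw [b1, Pi.mul_apply, b2, b3, Pi.sub_apply, b4]
          filter_upwards [AEEqFun.coeFn_add (absL pB * B.nrm (ψ i + Z m))
              (∑ j, absL (cL j - pB * Dc m j) * B.nrm (ψ' j)),
            AEEqFun.coeFn_mul (absL pB) (B.nrm (ψ i + Z m)),
            coeFn_absL pB, hpBco, hINV m,
            coeFn_sumL Finset.univ (fun j => absL (cL j - pB * Dc m j) * B.nrm (ψ' j)),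
            hj] with ω b1 b2 b3 b4 b5 b6 b7
          rw [b1, Pi.add_apply, b2, Pi.mul_apply, b3, b4, b5, b6]
          have habs : ‖if V ω ≤ 0 then (1:ℂ) else 0‖
              = (if V ω ≤ 0 then (1:ℝ) else 0) := by
            by_cases hv : V ω ≤ 0 <;> simp [hv]
          rw [habs]
          congr 1
          exact Finset.sum_congr rfl fun j _ => b7 j
        have hallm : ∀ᵐ ω ∂μ, ∀ m : ℕ,
            ⇑(B.nrm (pB • ψ i + ∑ j, cL j • ψ' j)) ω
            ≤ (if V ω ≤ 0 then (1:ℝ) else 0) * H m ω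
              + ∑ j, ‖gL j ω - pfun m j ω‖ * (B.nrm (ψ' j)) ω := by
          rw [ae_all_iff]; intro m
          have h1 := hrel m
          rw [le_iffL] at h1
          filter_upwards [h1, hco2 m] with ω a1 a2
          rw [← a2]
          exact a1
        filter_upwards [hallm, htendae, AEEqFun.coeFn_zero (β := ℝ) (μ := μ)] with ω h1 h2 h3
        rw [h3, Pi.zero_apply]
        -- the right-hand side tends to 0
        have hT1 : Filter.Tendsto (fun m => (if V ω ≤ 0 then (1:ℝ) else 0) * H m ω)
            Filter.atTop (nhds 0) := by
          by_cases hv : V ω ≤ 0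
          · have hV0 : V ω = 0 := le_antisymm hv (hVpos ω)
            simp only [hv, if_true, one_mul]
            rw [← hV0]
            exact hVtend ω
          · simp only [hv, if_false, zero_mul]
            exact tendsto_const_nhds
        have hT2 : Filter.Tendsto (fun m =>
            ∑ j, ‖gL j ω - pfun m j ω‖ * (B.nrm (ψ' j)) ω)
            Filter.atTop (nhds 0) := by
          have : (0:ℝ) = ∑ j : Fin n, (0:ℝ) * (B.nrm (ψ' j)) ω := by simp
          rw [this]
          refine tendsto_finset_sum _ fun j _ => ?_
          refine Filter.Tendsto.mul_const _ ?_
          have habs : Filter.Tendsto (fun m => gL j ω - pfun m j ω)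
              Filter.atTop (nhds 0) := by
            have := (h2 j).const_sub (gL j ω)
            simpa using this
          have := habs.norm
          simpa using this
        have hT := hT1.add hT2
        rw [add_zero] at hT
        exact ge_of_tendsto hT (Filter.Eventually.of_forall h1)
      have hw0' : pB • ψ i + ∑ j, cL j • ψ' j = 0 := (B.nrm_eq_zero _).1 hw0
      have hfull : ∑ t, (Fin.insertNth (α := fun _ => L0 Ω μ) i pB (fun j => cL j)) t • ψ t
          = 0 := by
        rw [Fin.sum_univ_succAbove
          (fun t => (Fin.insertNth (α := fun _ => L0 Ω μ) i pB (fun j => cL j)) t • ψ t) i]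
        simp only [Fin.insertNth_apply_same, Fin.insertNth_apply_succAbove]
        exact hw0'
      have hpB0 : pB = 0 := by
        have := hind _ hfull i
        rwa [Fin.insertNth_apply_same] at this
      have hzz : ⇑pB =ᵐ[μ] ⇑(0 : L0 Ω μ) := by rw [hpB0]
      filter_upwards [hpBco, hzz, AEEqFun.coeFn_zero (β := ℂ) (μ := μ)] with ω h1 h2 h3
      by_contra hc
      push_neg at hc
      have hle : V ω ≤ 0 := hc
      rw [h2, h3, Pi.zero_apply] at h1
      rw [if_pos hle] at h1
      exact one_ne_zero h1.symm
    -- final bound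
    set kk : L0R Ω μ := AEEqFun.mk (fun ω => if 0 < V ω then (V ω)⁻¹ else 1)
      ((Measurable.ite (measurableSet_lt measurable_const hVmeas) hVmeas.inv
        measurable_const).aestronglyMeasurable) with hkk
    refine ⟨kk, ?_, ?_⟩
    · rw [le_iffL]
      filter_upwards [AEEqFun.coeFn_mk (μ := μ)
        (fun ω => if 0 < V ω then (V ω)⁻¹ else 1) _,
        AEEqFun.coeFn_zero (β := ℝ) (μ := μ)] with ω h1 h2
      rw [h1, h2]
      by_cases h : 0 < V ω
      · simp only [h, if_true]
        positivity
      · simp [h]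
    · intro d
      set c : L0 Ω μ := d i with hcd
      set zc : Y := ∑ j, d (i.succAbove j) • ψ' j with hzc
      have hsum : ∑ t, d t • ψ t = c • ψ i + zc :=
        Fin.sum_univ_succAbove (fun t => d t • ψ t) i
      have asmc := AEEqFun.aestronglyMeasurable c
      set Mc : Ω → ℂ := AEStronglyMeasurable.mk _ asmc with hMc
      have hMcmeas : Measurable Mc := asmc.stronglyMeasurable_mk.measurable
      have hMceq : ⇑c =ᵐ[μ] Mc := asmc.ae_eq_mk
      set ce : L0 Ω μ := AEEqFun.mk (fun ω => if Mc ω = 0 then 0 else (Mc ω)⁻¹)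
        ((Measurable.ite (hMcmeas (measurableSet_singleton 0)) measurable_const
          hMcmeas.inv).aestronglyMeasurable) with hce
      have hceco : ⇑ce =ᵐ[μ] fun ω => if Mc ω = 0 then 0 else (Mc ω)⁻¹ :=
        AEEqFun.coeFn_mk _ _
      have hπc : (c * ce) * c = c := by
        apply AEEqFun.ext
        filter_upwards [AEEqFun.coeFn_mul (c * ce) c, AEEqFun.coeFn_mul c ce,
          hMceq, hceco] with ω a1 a2 a3 a4
        rw [a1, Pi.mul_apply, a2, Pi.mul_apply, a3, a4]
        by_cases hz : Mc ω = 0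
        · simp [hz]
        · rw [if_neg hz]
          field_simp [hz]
      have hzce : ce • zc = ∑ j, (ce * d (i.succAbove j)) • ψ' j := by
        rw [hzc, Finset.smul_sum]
        exact Finset.sum_congr rfl fun j _ => by rw [mul_smul]
      have hA1 : mkV ≤ B.nrm (ψ i + ce • zc) := by
        rw [hzce]
        exact hVlow (fun j => ce * d (i.succAbove j))
      have halg : c • (ψ i + ce • zc) = (c * ce) • (c • ψ i + zc) := by
        rw [smul_add, smul_add, smul_smul, smul_smul, hπc]
      have hA2 : absL c * B.nrm (ψ i + ce • zc) = absL (c * ce) * B.nrm (c • ψ i + zc) := by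
        rw [← B.nrm_smul, ← B.nrm_smul, halg]
      rw [hsum, le_iffL]
      have h1 := hA1
      rw [le_iffL] at h1
      have hn2 := B.nrm_nonneg (c • ψ i + zc)
      rw [← AEEqFun.coeFn_le] at hn2
      have hA2' := congrArg (fun (f : L0R Ω μ) => ⇑f) hA2
      filter_upwards [h1, hVne, hMceq, hceco, hn2,
        AEEqFun.coeFn_zero (β := ℝ) (μ := μ),
        AEEqFun.coeFn_mk V hVmeas.aestronglyMeasurable,
        AEEqFun.coeFn_mk (fun ω => if 0 < V ω then (V ω)⁻¹ else 1)
          ((Measurable.ite (measurableSet_lt measurable_const hVmeas) hVmeas.inv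
            measurable_const).aestronglyMeasurable),
        AEEqFun.coeFn_mul kk (B.nrm (c • ψ i + zc)),
        AEEqFun.coeFn_mul (absL c) (B.nrm (ψ i + ce • zc)),
        AEEqFun.coeFn_mul (absL (c * ce)) (B.nrm (c • ψ i + zc)),
        AEEqFun.coeFn_mul c ce,
        coeFn_absL c, coeFn_absL (c * ce)] with ω a1 a2 a3 a4 a5 a6 a7 a8 a9 a10 a11 a12 a13 a14
      rw [a6, Pi.zero_apply] at a5
      rw [a7] at a1
      have hA2ω := congrFun hA2' ω
      simp only [a10, a11, Pi.mul_apply, a13, a14, a12, a3, a4] at hA2ω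
      rw [a9, Pi.mul_apply, a8]
      rw [if_pos a2]
      have hcabs : ⇑(absL c) ω = ‖Mc ω‖ := by rw [a13, a3]
      have hgoal2 : ⇑(absL (d i)) ω = ‖Mc ω‖ := hcabs
      rw [hgoal2]
      by_cases hz : Mc ω = 0
      · rw [hz]
        simp only [norm_zero]
        exact mul_nonneg (inv_nonneg.2 (le_of_lt a2)) a5
      · have hone : Mc ω * (if Mc ω = 0 then 0 else (Mc ω)⁻¹) = 1 := by
          rw [if_neg hz]
          field_simp
        rw [hone] at hA2ω
        simp only [norm_one, one_mul] at hA2ω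
        -- hA2ω : |Mc ω| * n1 = n2
        have hstep : ‖Mc ω‖ * V ω ≤ ‖Mc ω‖ * (B.nrm (ψ i + ce • zc)) ω :=
          mul_le_mul_of_nonneg_left a1 (norm_nonneg _)
        rw [hA2ω] at hstep
        have hfin : ‖Mc ω‖ = (V ω)⁻¹ * (‖Mc ω‖ * V ω) := by
          rw [mul_comm (‖Mc ω‖) (V ω), ← mul_assoc,
            inv_mul_cancel₀ (ne_of_gt a2), one_mul]
        rw [hfin]
        exact mul_le_mul_of_nonneg_left hstep (inv_nonneg.2 (le_of_lt a2))

end Statement2Proof3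
/-- An `L⁰`-bounded `L⁰`-linear operator between Banach–Kantorovich
spaces which is homogeneous of type `n`, with basis `ψ₁,…,ψₙ` of its range, has the
form `a(φ) = ∑ gₖ(φ) ψₖ` for `L⁰`-bounded `L⁰`-linear functionals `gₖ ∈ X*`. -/
theorem statement2 {X Y : Type*} [AddCommGroup X] [Module (L0 Ω μ) X]
    [AddCommGroup Y] [Module (L0 Ω μ) Y]
    (BX : BKSpace Ω μ X) (BY : BKSpace Ω μ Y) (a : X →ₗ[L0 Ω μ] Y)
    (hbound : ∃ c : L0R Ω μ, ∀ x : X, BY.nrm (a x) ≤ c * BX.nrm x)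
    (n : ℕ) (ψ : Fin n → Y) (hmem : ∀ i, ψ i ∈ LinearMap.range a)
    (hbasis : ∀ y ∈ LinearMap.range a, ∃! c : Fin n → L0 Ω μ, y = ∑ i, c i • ψ i) :
    ∃ g : Fin n → (X →ₗ[L0 Ω μ] L0 Ω μ),
      (∀ i, ∃ c : L0R Ω μ, ∀ x : X, absL (g i x) ≤ c * BX.nrm x) ∧
      ∀ x : X, a x = ∑ i, g i x • ψ i := by
  classical
  obtain ⟨cb, hcb⟩ := hbound
  have hind : IndepL μ n ψ := by
    intro d hd j
    obtain ⟨c0, hc0, huniq⟩ := hbasis 0 (Submodule.zero_mem _)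
    have h1 : (fun _ : Fin n => (0 : L0 Ω μ)) = c0 := huniq _ (by simp)
    have h2 : d = c0 := huniq d hd.symm
    rw [h2, ← h1]
  choose k hk0 hkb using coordBound BY n ψ hind
  have hrep : ∀ x : X, ∃ c : Fin n → L0 Ω μ, a x = ∑ j, c j • ψ j := fun x =>
    (hbasis (a x) ⟨x, rfl⟩).exists
  choose co hco using hrep
  have huniqc : ∀ (x : X) (c c' : Fin n → L0 Ω μ),
      a x = ∑ j, c j • ψ j → a x = ∑ j, c' j • ψ j → c = c' := by
    intro x c c' h h'
    obtain ⟨c0, hc0, hu⟩ := hbasis (a x) ⟨x, rfl⟩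
    rw [hu c h, hu c' h']
  have hadd : ∀ x y : X, co (x + y) = co x + co y := by
    intro x y
    refine huniqc (x + y) _ _ (hco _) ?_
    rw [map_add, hco x, hco y, ← Finset.sum_add_distrib]
    exact Finset.sum_congr rfl fun j _ => (add_smul _ _ _).symm
  have hsmul : ∀ (r : L0 Ω μ) (x : X), co (r • x) = fun j => r * co x j := by
    intro r x
    refine huniqc (r • x) _ _ (hco _) ?_
    rw [_root_.map_smul, hco x, Finset.smul_sum]
    exact Finset.sum_congr rfl fun j _ => (mul_smul _ _ _).symm
  refine ⟨fun i =>
    { toFun := fun x => co x i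
      map_add' := fun x y => show co (x + y) i = co x i + co y i by
        rw [hadd x y]; rfl
      map_smul' := fun r x => show co (r • x) i = r • co x i by
        rw [hsmul r x]
        exact (smul_eq_mul (α := L0 Ω μ) _ _).symm }, ?_, fun x => hco x⟩
  intro i
  refine ⟨k i * cb, fun x => ?_⟩
  have h1 : absL (co x i) ≤ k i * BY.nrm (a x) := by
    have := hkb i (co x)
    rwa [← hco x] at this
  have h2 := mulleL (hk0 i) (hcb x)
  exact le_trans h1 (le_trans h2 (le_of_eq (mul_assoc _ _ _).symm))

end KHPaper
end

section
/- Every L^0-linear derivation δ: U → L(D) of a standard algebra U ⊆ L(D) is spatially implemented: there exists x ∈ L(D) such that δ(a) = xa − ax for all a ∈ U. -/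
open MeasureTheory

namespace KHPaper

variable {Ω : Type} [MeasurableSpace Ω] {μ : Measure Ω}

/-- If the KH-norm of `x` is `1`, then `⟨x,x⟩ = 1`. -/
lemma inner_self_eq_one {X : Type*} [AddCommGroup X] [Module (L0 Ω μ) X]
    (K : KHInner Ω μ X) (x : X) (h : K.knorm x = 1) : K.inner x x = 1 := by
  have hr : reL (K.inner x x) = (1 : L0R Ω μ) := by
    have h1 : sqrtL (reL (K.inner x x)) = 1 := h
    have h2 : ⇑((reL (K.inner x x)).comp Real.sqrt Real.continuous_sqrt)
        =ᵐ[μ] Real.sqrt ∘ (reL (K.inner x x)) :=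
      AEEqFun.coeFn_comp _ _ _
    rw [show (reL (K.inner x x)).comp Real.sqrt Real.continuous_sqrt = sqrtL (reL (K.inner x x))
        from rfl, h1] at h2
    apply AEEqFun.ext
    filter_upwards [h2.symm, AEEqFun.coeFn_one (β := ℝ) (μ := μ)] with ω hω h1ω
    have hs : Real.sqrt ((reL (K.inner x x)) ω) = 1 := by
      simpa [Function.comp, h1ω] using hω
    rw [h1ω]
    simpa using Real.sqrt_eq_one.mp hs
  have hself := K.self_real x
  rw [hr] at hself
  rw [hself]
  apply AEEqFun.ext
  have h3 : ⇑((1 : L0R Ω μ).comp Complex.ofReal Complex.continuous_ofReal)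
      =ᵐ[μ] Complex.ofReal ∘ (1 : L0R Ω μ) := AEEqFun.coeFn_comp _ _ _
  filter_upwards [h3, AEEqFun.coeFn_one (β := ℝ) (μ := μ),
    AEEqFun.coeFn_one (β := ℂ) (μ := μ)] with ω hω h1ω h1ω'
  show ((1 : L0R Ω μ).comp Complex.ofReal Complex.continuous_ofReal) ω = _
  simp [hω, h1ω, h1ω']

/-- Every `L⁰`-linear derivation `δ : U → L(D)` of a standard
algebra `U ⊆ L(D)` is inner: `δ(a) = xa - ax` for some `x ∈ L(D)`. -/
theorem statement8 {X : Type*} [AddCommGroup X] [Module (L0 Ω μ) X]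
    (K : KHInner Ω μ X) (hK : K.IsKH) (D : Submodule (L0 Ω μ) X)
    (hD : BODenseN K.knorm (D : Set X))
    (e : D) (he : K.knorm (e : X) = 1)
    (U : Set (Module.End (L0 Ω μ) D)) (hU : IsStandard U)
    (δ : Module.End (L0 Ω μ) D → Module.End (L0 Ω μ) D)
    (hadd : ∀ a ∈ U, ∀ b ∈ U, δ (a + b) = δ a + δ b)
    (hsmul : ∀ c : L0 Ω μ, ∀ a ∈ U, δ (c • a) = c • δ a)
    (hder : ∀ a ∈ U, ∀ b ∈ U, δ (a * b) = δ a * b + a * δ b) :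
    ∃ x : Module.End (L0 Ω μ) D, ∀ a ∈ U, δ a = x * a - a * x := by
  -- rank one operators `φ ⊗ e` belong to `U`
  have hmem : ∀ φ : D, rankOneE K D φ e ∈ U := by
    intro φ
    refine hU.2 _ ⟨1, fun _ => φ, fun η => ⟨fun _ => K.inner (η : X) (e : X), ?_⟩⟩
    simp [rankOneE]
  have hone : K.inner (e : X) (e : X) = 1 := inner_self_eq_one K _ he
  -- `φ ⊗ e` applied to `e` is `φ`
  have happ : ∀ φ : D, rankOneE K D φ e e = φ := by
    intro φ
    show K.inner (e : X) (e : X) • φ = φ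
    rw [hone, one_smul]
  -- linearity of `φ ↦ φ ⊗ e`
  have radd : ∀ φ ψ : D, rankOneE K D (φ + ψ) e = rankOneE K D φ e + rankOneE K D ψ e := by
    intro φ ψ
    refine LinearMap.ext fun η => ?_
    show K.inner (η : X) (e : X) • (φ + ψ) = (rankOneE K D φ e + rankOneE K D ψ e) η
    show K.inner (η : X) (e : X) • (φ + ψ)
      = K.inner (η : X) (e : X) • φ + K.inner (η : X) (e : X) • ψ
    rw [smul_add]
  have rsmul : ∀ (c : L0 Ω μ) (φ : D), rankOneE K D (c • φ) e = c • rankOneE K D φ e := by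
    intro c φ
    refine LinearMap.ext fun η => ?_
    show K.inner (η : X) (e : X) • (c • φ) = c • (K.inner (η : X) (e : X) • φ)
    rw [smul_comm]
  -- the implementing operator
  refine ⟨{ toFun := fun φ => δ (rankOneE K D φ e) e
            map_add' := by
              intro φ ψ
              show δ (rankOneE K D (φ + ψ) e) e = δ (rankOneE K D φ e) e + δ (rankOneE K D ψ e) e
              rw [radd, hadd _ (hmem φ) _ (hmem ψ)]; rfl
            map_smul' := by
              intro c φ
              show δ (rankOneE K D (c • φ) e) e = (RingHom.id (L0 Ω μ)) c • δ (rankOneE K D φ e) e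
              rw [rsmul, hsmul c _ (hmem φ)]; rfl }, ?_⟩
  intro a ha
  refine LinearMap.ext fun φ => ?_
  have hcomp : a * rankOneE K D φ e = rankOneE K D (a φ) e := by
    refine LinearMap.ext fun η => ?_
    show a (K.inner (η : X) (e : X) • φ) = K.inner (η : X) (e : X) • a φ
    exact a.map_smul _ _
  have key : δ (rankOneE K D (a φ) e) e
      = δ a (rankOneE K D φ e e) + a (δ (rankOneE K D φ e) e) := by
    rw [← hcomp, hder a ha _ (hmem φ)]; rfl
  rw [happ] at key
  show δ a φ = δ (rankOneE K D (a φ) e) e - a (δ (rankOneE K D φ e) e)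
  rw [key]; abel

end KHPaper
end
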